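/- Every shared-randomness strategy for the CHSH game wins with probability at most 3/4. Precisely: let Λ be a finite nonempty set, let q ∈ Δ(Λ), and let p_1 : {0,1} × Λ → Δ({0,1}) and p_2 : {0,1} × Λ → Δ({0,1}) be arbitrary. Then (1/4) · Σ_{x,y∈{0,1}} Σ_{(a,b)∈{0,1}² : a XOR b = x AND y} Σ_{λ∈Λ} q(λ) p_1(x,λ)(a) p_2(y,λ)(b) ≤ 3/4. -/

import Mathlib

/-- A probability mass function on a finite type `Y`. -/
def IsPMF {Y : Type*} [Fintype Y] (p : Y → ℝ) : Prop :=
  (∀ y, 0 ≤ p y) ∧ ∑ y, p y = 1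

lemma chsh_scalar (a b c d : ℝ) (ha : 0 ≤ a) (ha' : a ≤ 1) (hb : 0 ≤ b) (hb' : b ≤ 1)
    (hc : 0 ≤ c) (hc' : c ≤ 1) (hd : 0 ≤ d) (hd' : d ≤ 1) :
    (a*b + (1-a)*(1-b)) + (a*c + (1-a)*(1-c)) + (d*b + (1-d)*(1-b)) + (d*(1-c) + (1-d)*c) ≤ 3 := by
  nlinarith [mul_nonneg ha hb, mul_nonneg (sub_nonneg.2 ha') (sub_nonneg.2 hb'),
    mul_nonneg hc hd, mul_nonneg (sub_nonneg.2 hc') (sub_nonneg.2 hd'),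
    mul_nonneg ha (sub_nonneg.2 hc'), mul_nonneg (sub_nonneg.2 ha') hc,
    mul_nonneg hd (sub_nonneg.2 hb'), mul_nonneg (sub_nonneg.2 hd') hb,
    mul_nonneg ha (sub_nonneg.2 hd'), mul_nonneg (sub_nonneg.2 ha') hd,
    mul_nonneg hb (sub_nonneg.2 hc'), mul_nonneg (sub_nonneg.2 hb') hc]

/-- every shared-randomness strategy for the CHSH game wins with
probability at most 3/4.  Here `Λ` is a finite nonempty set, `q ∈ Δ(Λ)` is the shared
randomness, and `p₁ x λ`, `p₂ y λ` are the players' local response distributions; on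
`Fin 2`, `a + b` is XOR and `x * y` is AND, so `a + b = x * y` is the CHSH winning
condition. -/
theorem chsh_classical_bound {Λ : Type} [Fintype Λ] [Nonempty Λ]
    (q : Λ → ℝ) (hq : IsPMF q)
    (p₁ p₂ : Fin 2 → Λ → Fin 2 → ℝ)
    (hp₁ : ∀ x lam, IsPMF (p₁ x lam)) (hp₂ : ∀ y lam, IsPMF (p₂ y lam)) :
    (1 / 4 : ℝ) * ∑ x : Fin 2, ∑ y : Fin 2, ∑ a : Fin 2, ∑ b : Fin 2,
        (if a + b = x * y then ∑ lam, q lam * p₁ x lam a * p₂ y lam b else 0)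
      ≤ 3 / 4 := by
  have key : ∑ lam, (q lam * p₁ 0 lam 0 * p₂ 0 lam 0 + q lam * p₁ 0 lam 1 * p₂ 0 lam 1
      + (q lam * p₁ 0 lam 0 * p₂ 1 lam 0 + q lam * p₁ 0 lam 1 * p₂ 1 lam 1)
      + (q lam * p₁ 1 lam 0 * p₂ 0 lam 0 + q lam * p₁ 1 lam 1 * p₂ 0 lam 1)
      + (q lam * p₁ 1 lam 0 * p₂ 1 lam 1 + q lam * p₁ 1 lam 1 * p₂ 1 lam 0))
      ≤ ∑ lam, 3 * q lam := by
    apply Finset.sum_le_sum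
    intro lam _
    have hq0 := hq.1 lam
    have h10 := hp₁ 0 lam
    have h11 := hp₁ 1 lam
    have h20 := hp₂ 0 lam
    have h21 := hp₂ 1 lam
    simp only [IsPMF, Fin.sum_univ_two] at h10 h11 h20 h21
    obtain ⟨ha0, hs0⟩ := h10
    obtain ⟨ha1, hs1⟩ := h11
    obtain ⟨hb0, ht0⟩ := h20
    obtain ⟨hb1, ht1⟩ := h21
    set a := p₁ 0 lam 0
    set d := p₁ 1 lam 0
    set b := p₂ 0 lam 0
    set c := p₂ 1 lam 0
    have e1 : p₁ 0 lam 1 = 1 - a := by linarith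
    have e2 : p₁ 1 lam 1 = 1 - d := by linarith
    have e3 : p₂ 0 lam 1 = 1 - b := by linarith
    have e4 : p₂ 1 lam 1 = 1 - c := by linarith
    rw [e1, e2, e3, e4]
    have hS := chsh_scalar a b c d (ha0 0) (by linarith [ha0 1]) (hb0 0) (by linarith [hb0 1])
      (hb1 0) (by linarith [hb1 1]) (ha1 0) (by linarith [ha1 1])
    nlinarith [mul_le_mul_of_nonneg_left hS hq0]
  have hsum : ∑ lam, 3 * q lam = 3 := by
    rw [← Finset.mul_sum, hq.2, mul_one]
  simp only [Finset.sum_add_distrib] at key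
  rw [hsum] at key
  simp only [Fin.sum_univ_two]
  norm_num
  simp only [show ((1 + 1 : Fin 2) = 0) ↔ True from by decide,
    if_true, if_false]
  linarith [key]
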